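/- Let A be the matrix [[2,1],[1,1]] acting on the torus T² = ℝ²/ℤ², and let T be the translation T(x) = x + w where w ≠ 0 is parallel to the unstable eigenvector of A. In the group generated by A and T, the element T is distorted: T^{tr(Aⁿ)} can be written as a word of length at most 4n+2 in the generators, and tr(Aⁿ) grows exponentially in n. -/

import Mathlib

/-- The word length of `g` with respect to a generating set `S`. -/
noncomputable def wordLength {G : Type*} [Group G] (S : Set G) (g : G) : ℕ :=
  sInf {n : ℕ | ∃ w : Fin n → G, (∀ i, w i ∈ S ∨ (w i)⁻¹ ∈ S) ∧ (List.ofFn w).prod = g}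

/-- `f` is a distortion element with respect to the generating set `S`. -/
def IsDistortionElement {G : Type*} [Group G] (S : Set G) (f : G) : Prop :=
  ¬ IsOfFinOrder f ∧
    Filter.liminf (fun n : ℕ => (wordLength S (f ^ n) : ℝ) / n) Filter.atTop = 0

/-- The torus `T² = ℝ²/ℤ²`. -/
abbrev Torus2 := AddCircle (1 : ℝ) × AddCircle (1 : ℝ)

/-- The automorphism of `T²` induced by the matrix `[[2,1],[1,1]]`. -/
noncomputable def hypAuto : Equiv.Perm Torus2 where
  toFun p := ((2 : ℤ) • p.1 + p.2, p.1 + p.2)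
  invFun p := (p.1 - p.2, -p.1 + (2 : ℤ) • p.2)
  left_inv := by rintro ⟨x, y⟩; simp only [Prod.mk.injEq]; constructor <;> abel
  right_inv := by rintro ⟨x, y⟩; simp only [Prod.mk.injEq]; constructor <;> abel

/-- Translation of `T²` by the vector `w ∈ ℝ²`. -/
noncomputable def torusTranslation (w : ℝ × ℝ) : Equiv.Perm Torus2 :=
  Equiv.addLeft (((w.1 : AddCircle (1 : ℝ)), (w.2 : AddCircle (1 : ℝ))) : Torus2)

/-! ### Auxiliary lemmas -/

lemma Mess.torusTranslation_mul (u v : ℝ × ℝ) :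
    torusTranslation u * torusTranslation v = torusTranslation (u + v) := by
  ext p
  · simp only [torusTranslation, Equiv.Perm.mul_apply, Equiv.coe_addLeft, Prod.fst_add,
      Prod.snd_add]
    rw [QuotientAddGroup.mk_add]
    abel
  · simp only [torusTranslation, Equiv.Perm.mul_apply, Equiv.coe_addLeft, Prod.fst_add,
      Prod.snd_add]
    rw [QuotientAddGroup.mk_add]
    abel

lemma Mess.torusTranslation_zero : torusTranslation 0 = 1 := by
  ext p <;> simp [torusTranslation]

lemma Mess.hypAuto_mul_trans (v : ℝ × ℝ) :
    hypAuto * torusTranslation v = torusTranslation (2*v.1+v.2, v.1+v.2) * hypAuto := by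
  ext p
  · simp only [torusTranslation, hypAuto, Equiv.Perm.mul_apply, Equiv.coe_fn_mk,
      Equiv.coe_addLeft, Prod.fst_add, Prod.snd_add, two_zsmul]
    rw [two_mul v.1, QuotientAddGroup.mk_add, QuotientAddGroup.mk_add]
    abel
  · simp only [torusTranslation, hypAuto, Equiv.Perm.mul_apply, Equiv.coe_fn_mk,
      Equiv.coe_addLeft, Prod.fst_add, Prod.snd_add, two_zsmul]
    rw [QuotientAddGroup.mk_add]
    abel

/-- `torusTranslation` as an additive homomorphism. -/
noncomputable def Mess.transHom : (ℝ × ℝ) →+ Additive (Equiv.Perm Torus2) where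
  toFun v := Additive.ofMul (torusTranslation v)
  map_zero' := congrArg Additive.ofMul Mess.torusTranslation_zero
  map_add' u v := by
    simp only [← ofMul_mul, Mess.torusTranslation_mul]

lemma Mess.torusTranslation_zpow (v : ℝ × ℝ) (k : ℤ) :
    torusTranslation v ^ k = torusTranslation ((k : ℝ) • v) := by
  have h := map_zsmul Mess.transHom k v
  have h2 : ((k : ℝ) • v) = k • v := Int.cast_smul_eq_zsmul ℝ k v
  rw [h2]
  have := congrArg Additive.toMul h
  exact this.symm

lemma Mess.torusTranslation_pow (v : ℝ × ℝ) (k : ℕ) :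
    torusTranslation v ^ k = torusTranslation ((k : ℝ) • v) := by
  rw [← zpow_natCast, Mess.torusTranslation_zpow]
  norm_num

/-- The linear action of the matrix on `ℝ²`. -/
def Mess.Amap (v : ℝ × ℝ) : ℝ × ℝ := (2 * v.1 + v.2, v.1 + v.2)

lemma Mess.conj_trans (v : ℝ × ℝ) :
    hypAuto * torusTranslation v * hypAuto⁻¹ = torusTranslation (Mess.Amap v) := by
  rw [Mess.hypAuto_mul_trans]
  have : hypAuto * hypAuto⁻¹ = 1 := mul_inv_cancel hypAuto
  rw [mul_assoc, this, mul_one, Mess.Amap]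

lemma Mess.conj_trans' (v : ℝ × ℝ) :
    hypAuto⁻¹ * torusTranslation (Mess.Amap v) * hypAuto = torusTranslation v := by
  rw [← Mess.conj_trans]
  group

lemma Mess.Amap_smul (c : ℝ) (v : ℝ × ℝ) : Mess.Amap (c • v) = c • Mess.Amap v := by
  simp only [Mess.Amap, Prod.smul_mk, Prod.smul_fst, Prod.smul_snd, smul_eq_mul, Prod.mk.injEq]
  exact ⟨by ring, by ring⟩

lemma Mess.pow_conj (w : ℝ × ℝ) (lam : ℝ) (heig : Mess.Amap w = lam • w) (n : ℕ) :
    hypAuto ^ n * torusTranslation w * (hypAuto ^ n)⁻¹ = torusTranslation (lam ^ n • w) := by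
  induction n with
  | zero => simp
  | succ k ih =>
    have h1 : hypAuto ^ (k + 1) * torusTranslation w * (hypAuto ^ (k + 1))⁻¹
        = hypAuto * (hypAuto ^ k * torusTranslation w * (hypAuto ^ k)⁻¹) * hypAuto⁻¹ := by
      rw [pow_succ']
      group
    rw [h1, ih, Mess.conj_trans, Mess.Amap_smul, heig, smul_smul, ← pow_succ]

lemma Mess.pow_conj' (w : ℝ × ℝ) (lam : ℝ) (hlam0 : lam ≠ 0)
    (heig : Mess.Amap w = lam • w) (n : ℕ) :
    (hypAuto ^ n)⁻¹ * torusTranslation w * hypAuto ^ n = torusTranslation (lam⁻¹ ^ n • w) := by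
  induction n with
  | zero => simp
  | succ k ih =>
    have h1 : (hypAuto ^ (k + 1))⁻¹ * torusTranslation w * hypAuto ^ (k + 1)
        = hypAuto⁻¹ * ((hypAuto ^ k)⁻¹ * torusTranslation w * hypAuto ^ k) * hypAuto := by
      rw [pow_succ]
      group
    have h2 : Mess.Amap (lam⁻¹ ^ (k + 1) • w) = lam⁻¹ ^ k • w := by
      rw [Mess.Amap_smul, heig, smul_smul]
      congr 1
      rw [pow_succ', mul_right_comm, inv_mul_cancel₀ hlam0, one_mul]
    rw [h1, ih, ← h2, Mess.conj_trans']

lemma Mess.wordLength_le_of_list {G : Type*} [Group G] (S : Set G) (g : G) (L : List G) (m : ℕ)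
    (hlen : L.length = m) (hmem : ∀ x ∈ L, x ∈ S ∨ x⁻¹ ∈ S) (hprod : L.prod = g) :
    wordLength S g ≤ m := by
  apply Nat.sInf_le
  subst hlen hprod
  exact ⟨L.get, fun i => hmem _ (L.get_mem i), by simp [List.ofFn_get]⟩

lemma Mess.sq_eq (M : Matrix (Fin 2) (Fin 2) ℤ) (hM : M = !![2, 1; 1, 1]) :
    M ^ 2 = (3 : ℤ) • M - 1 := by
  subst hM
  ext i j
  fin_cases i <;> fin_cases j <;>
    simp [pow_two, Matrix.mul_apply, Fin.sum_univ_two, Matrix.one_apply]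

lemma Mess.trace_rec (M : Matrix (Fin 2) (Fin 2) ℤ) (hM : M = !![2, 1; 1, 1]) (n : ℕ) :
    Matrix.trace (M ^ (n + 2)) = 3 * Matrix.trace (M ^ (n + 1)) - Matrix.trace (M ^ n) := by
  have h2 : M ^ (n + 2) = (3 : ℤ) • M ^ (n + 1) - M ^ n := by
    have h : M ^ (n + 2) = M ^ n * M ^ 2 := by rw [← pow_add]
    rw [h, Mess.sq_eq M hM, Matrix.mul_sub, Matrix.mul_smul, Matrix.mul_one, ← pow_succ]
  rw [h2, Matrix.trace_sub, Matrix.trace_smul, smul_eq_mul]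

lemma Mess.trace_zero' (M : Matrix (Fin 2) (Fin 2) ℤ) : Matrix.trace (M ^ 0) = 2 := by
  simp [Matrix.trace_one]

lemma Mess.trace_one' (M : Matrix (Fin 2) (Fin 2) ℤ) (hM : M = !![2, 1; 1, 1]) :
    Matrix.trace (M ^ 1) = 3 := by
  subst hM
  simp [Matrix.trace_fin_two]

lemma Mess.sqrt5_sq : Real.sqrt 5 ^ 2 = 5 := Real.sq_sqrt (by norm_num)

lemma Mess.lam_pos (lam : ℝ) (hlam : lam = (3 + Real.sqrt 5) / 2) : 0 < lam := by
  rw [hlam]; positivity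

lemma Mess.lam_ge_two (lam : ℝ) (hlam : lam = (3 + Real.sqrt 5) / 2) : 2 ≤ lam := by
  have h1 : (1:ℝ) ≤ Real.sqrt 5 := by
    nlinarith [Mess.sqrt5_sq, Real.sqrt_nonneg 5]
  rw [hlam]; linarith

lemma Mess.lam_sq (lam : ℝ) (hlam : lam = (3 + Real.sqrt 5) / 2) : lam ^ 2 = 3 * lam - 1 := by
  rw [hlam]; nlinarith [Mess.sqrt5_sq]

lemma Mess.mu_eq (lam : ℝ) (hlam : lam = (3 + Real.sqrt 5) / 2) :
    lam⁻¹ = (3 - Real.sqrt 5) / 2 := by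
  have h : lam * ((3 - Real.sqrt 5) / 2) = 1 := by
    rw [hlam]; nlinarith [Mess.sqrt5_sq]
  exact inv_eq_of_mul_eq_one_right h

lemma Mess.mu_sq (lam : ℝ) (hlam : lam = (3 + Real.sqrt 5) / 2) :
    lam⁻¹ ^ 2 = 3 * lam⁻¹ - 1 := by
  rw [Mess.mu_eq lam hlam]
  nlinarith [Mess.sqrt5_sq]

lemma Mess.lam_irrational (lam : ℝ) (hlam : lam = (3 + Real.sqrt 5) / 2) : Irrational lam := by
  rw [hlam]
  have h5 : Irrational (Real.sqrt 5) := by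
    have : Nat.Prime 5 := by norm_num
    exact this.irrational_sqrt
  have := (h5.ratCast_add 3).div_natCast (by norm_num : (2:ℕ) ≠ 0)
  convert this using 1
  norm_num

/-- Mess's example: for `A = [[2,1],[1,1]]` acting on `T²` and `T` the translation by a
nonzero vector `w` parallel to the unstable eigenvector of `A` (eigenvalue
`λ = (3+√5)/2`), the trace of `Aⁿ` equals `λⁿ + λ⁻ⁿ` (growing exponentially),
`T^{tr(Aⁿ)}` is a word of length at most `4n+2` in `{A, T}`, and `T` is a distortion
element of the group generated by `A` and `T`. -/
theorem translation_distorted_in_group_with_hyperbolic_auto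
    (w : ℝ × ℝ) (hw0 : w ≠ 0)
    (lam : ℝ) (hlam : lam = (3 + Real.sqrt 5) / 2)
    (hweig : 2 * w.1 + w.2 = lam * w.1 ∧ w.1 + w.2 = lam * w.2)
    (M : Matrix (Fin 2) (Fin 2) ℤ) (hM : M = !![2, 1; 1, 1]) :
    (∀ n : ℕ, ((Matrix.trace (M ^ n) : ℤ) : ℝ) = lam ^ n + lam⁻¹ ^ n) ∧
    (∀ n : ℕ,
      wordLength ({hypAuto, torusTranslation w} : Set (Equiv.Perm Torus2))
        (torusTranslation w ^ (Matrix.trace (M ^ n))) ≤ 4 * n + 2) ∧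
    IsDistortionElement ({hypAuto, torusTranslation w} : Set (Equiv.Perm Torus2))
      (torusTranslation w) := by
  have hlam_pos := Mess.lam_pos lam hlam
  have hlam0 : lam ≠ 0 := ne_of_gt hlam_pos
  have heig : Mess.Amap w = lam • w := by
    simp only [Mess.Amap, Prod.smul_mk, Prod.ext_iff, Prod.smul_fst, Prod.smul_snd, smul_eq_mul]
    exact hweig
  -- Part 1 : the trace formula
  have part1 : ∀ n : ℕ, ((Matrix.trace (M ^ n) : ℤ) : ℝ) = lam ^ n + lam⁻¹ ^ n := by
    have key : ∀ n : ℕ,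
        (((Matrix.trace (M ^ n) : ℤ) : ℝ) = lam ^ n + lam⁻¹ ^ n) ∧
        (((Matrix.trace (M ^ (n+1)) : ℤ) : ℝ) = lam ^ (n+1) + lam⁻¹ ^ (n+1)) := by
      intro n
      induction n with
      | zero =>
        constructor
        · rw [Mess.trace_zero' M]; norm_num
        · rw [Mess.trace_one' M hM]
          rw [pow_one, pow_one, Mess.mu_eq lam hlam, hlam]
          push_cast
          ring
      | succ k ih =>
        refine ⟨ih.2, ?_⟩
        have hrec := Mess.trace_rec M hM k
        have e1 : lam ^ (k+2) = 3 * lam ^ (k+1) - lam ^ k := by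
          have h := Mess.lam_sq lam hlam
          calc lam ^ (k+2) = lam ^ k * lam ^ 2 := by ring
            _ = lam ^ k * (3 * lam - 1) := by rw [h]
            _ = 3 * lam ^ (k+1) - lam ^ k := by ring
        have e2 : lam⁻¹ ^ (k+2) = 3 * lam⁻¹ ^ (k+1) - lam⁻¹ ^ k := by
          have h := Mess.mu_sq lam hlam
          calc lam⁻¹ ^ (k+2) = lam⁻¹ ^ k * lam⁻¹ ^ 2 := by ring
            _ = lam⁻¹ ^ k * (3 * lam⁻¹ - 1) := by rw [h]
            _ = 3 * lam⁻¹ ^ (k+1) - lam⁻¹ ^ k := by ring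
        have : ((Matrix.trace (M ^ (k+2)) : ℤ) : ℝ)
            = 3 * ((Matrix.trace (M ^ (k+1)) : ℤ) : ℝ) - ((Matrix.trace (M ^ k) : ℤ) : ℝ) := by
          rw [hrec]; push_cast; ring
        rw [show k + 1 + 1 = k + 2 from rfl, this, ih.1, ih.2, e1, e2]
        ring
    exact fun n => (key n).1
  -- The fundamental word identity
  have main_eq : ∀ n : ℕ, torusTranslation w ^ (Matrix.trace (M ^ n))
      = hypAuto ^ n * torusTranslation w * (hypAuto ^ n)⁻¹
        * ((hypAuto ^ n)⁻¹ * torusTranslation w * hypAuto ^ n) := by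
    intro n
    rw [Mess.pow_conj w lam heig n, Mess.pow_conj' w lam hlam0 heig n,
      Mess.torusTranslation_mul, Mess.torusTranslation_zpow]
    congr 1
    rw [part1 n, add_smul]
  -- Part 2 : the word length bound
  have part2 : ∀ n : ℕ,
      wordLength ({hypAuto, torusTranslation w} : Set (Equiv.Perm Torus2))
        (torusTranslation w ^ (Matrix.trace (M ^ n))) ≤ 4 * n + 2 := by
    intro n
    refine Mess.wordLength_le_of_list _ _
      (List.replicate n hypAuto ++ [torusTranslation w] ++ List.replicate (2*n) hypAuto⁻¹
        ++ [torusTranslation w] ++ List.replicate n hypAuto) _ ?_ ?_ ?_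
    · simp only [List.length_append, List.length_replicate, List.length_singleton]
      omega
    · intro x hx
      simp only [List.mem_append, List.mem_replicate, List.mem_singleton] at hx
      rcases hx with ((((⟨-, h⟩ | h) | ⟨-, h⟩) | h) | ⟨-, h⟩)
      · exact Or.inl (by rw [h]; exact Set.mem_insert _ _)
      · exact Or.inl (by rw [h]; exact Set.mem_insert_of_mem _ rfl)
      · exact Or.inr (by rw [h, inv_inv]; exact Set.mem_insert _ _)
      · exact Or.inl (by rw [h]; exact Set.mem_insert_of_mem _ rfl)
      · exact Or.inl (by rw [h]; exact Set.mem_insert _ _)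
    · rw [main_eq n]
      simp only [List.prod_append, List.prod_replicate, List.prod_singleton]
      rw [inv_pow hypAuto (2*n), two_mul, pow_add, mul_inv_rev]
      group
  refine ⟨part1, part2, ?_, ?_⟩
  -- T has infinite order
  · intro hfin
    obtain ⟨k, hk, hk1⟩ := isOfFinOrder_iff_pow_eq_one.mp hfin
    rw [Mess.torusTranslation_pow] at hk1
    have happ := congrFun (congrArg (fun (e : Equiv.Perm Torus2) => (e : Torus2 → Torus2)) hk1)
      ((0 : AddCircle (1:ℝ)), (0 : AddCircle (1:ℝ)))
    simp only [torusTranslation, Equiv.coe_addLeft, Equiv.Perm.coe_one, id_eq,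
      Prod.smul_fst, Prod.smul_snd, smul_eq_mul, Prod.mk_add_mk, add_zero,
      Prod.mk.injEq] at happ
    obtain ⟨h1, h2⟩ := happ
    obtain ⟨m, hm⟩ := (AddCircle.coe_eq_zero_iff (1:ℝ)).mp h1
    obtain ⟨p, hp⟩ := (AddCircle.coe_eq_zero_iff (1:ℝ)).mp h2
    simp only [zsmul_eq_mul, mul_one] at hm hp
    have hw2 : w.2 ≠ 0 := by
      intro h
      apply hw0
      have h2' := hweig.2
      rw [h, mul_zero, add_zero] at h2'
      exact Prod.ext h2' h
    have hp0 : (p : ℝ) ≠ 0 := by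
      rw [hp]
      exact mul_ne_zero (Nat.cast_ne_zero.mpr hk.ne') hw2
    have hlam_eq : lam * p = m + p := by
      have h2' := hweig.2
      have : lam * ((k:ℝ) * w.2) = (k:ℝ) * w.1 + (k:ℝ) * w.2 := by
        rw [← mul_assoc, mul_comm lam (k:ℝ), mul_assoc, ← h2']
        ring
      rw [hp, hm]
      exact this
    have : lam = (((m + p : ℚ) / (p : ℚ) : ℚ) : ℝ) := by
      push_cast
      field_simp
      linarith [hlam_eq]
    exact Mess.lam_irrational lam hlam ⟨(m + p : ℚ) / (p : ℚ), this.symm⟩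
  -- the liminf is zero
  · set S := ({hypAuto, torusTranslation w} : Set (Equiv.Perm Torus2)) with hS
    set T := torusTranslation w with hT
    set u : ℕ → ℝ := fun n : ℕ => (wordLength S (T ^ n) : ℝ) / n with hu
    have hu0 : ∀ n, 0 ≤ u n := fun n => div_nonneg (Nat.cast_nonneg _) (Nat.cast_nonneg _)
    have hu1 : ∀ n, u n ≤ 1 := by
      intro n
      have hwl : wordLength S (T ^ n) ≤ n := by
        refine Mess.wordLength_le_of_list _ _ (List.replicate n T) n (by simp) ?_ (by simp)
        intro x hx
        rw [List.eq_of_mem_replicate hx]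
        exact Or.inl (Set.mem_insert_of_mem _ rfl)
      rcases Nat.eq_zero_or_pos n with h | h
      · simp [hu, h]
      · rw [hu]
        have hn : (0:ℝ) < n := by exact_mod_cast h
        rw [div_le_one hn]
        exact_mod_cast hwl
    have hbdd : Filter.IsBoundedUnder (· ≥ ·) Filter.atTop u :=
      Filter.isBoundedUnder_of ⟨0, fun n => hu0 n⟩
    have hcob : Filter.IsCoboundedUnder (· ≥ ·) Filter.atTop u :=
      (Filter.isBoundedUnder_of ⟨1, fun n => hu1 n⟩ :
        Filter.IsBoundedUnder (· ≤ ·) Filter.atTop u).isCoboundedUnder_ge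
    have hge : 0 ≤ Filter.liminf u Filter.atTop :=
      Filter.le_liminf_of_le hcob (Filter.Eventually.of_forall hu0)
    have hle : ∀ ε : ℝ, 0 < ε → Filter.liminf u Filter.atTop ≤ ε := by
      intro ε hε
      apply Filter.liminf_le_of_frequently_le ?_ hbdd
      rw [Filter.frequently_atTop]
      intro N
      -- limit facts
      have ha := tendsto_pow_const_mul_const_pow_of_lt_one 1
        (by norm_num : (0:ℝ) ≤ 1/2) (by norm_num : (1/2 : ℝ) < 1)
      have hb := tendsto_pow_atTop_nhds_zero_of_lt_one
        (by norm_num : (0:ℝ) ≤ 1/2) (by norm_num : (1/2 : ℝ) < 1)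
      have h1 : Filter.Tendsto (fun k : ℕ => ((4 * k + 2 : ℕ) : ℝ) * (1/2 : ℝ) ^ k)
          Filter.atTop (nhds 0) := by
        have hc := (ha.const_mul 4).add (hb.const_mul 2)
        simp only [mul_zero, add_zero, zero_add] at hc
        convert hc using 2 with k
        push_cast
        ring
      have h2 : Filter.Tendsto (fun k : ℕ => (2:ℝ) ^ k) Filter.atTop Filter.atTop :=
        tendsto_pow_atTop_atTop_of_one_lt (by norm_num)
      have hev1 := h1.eventually_lt_const hε
      have hev2 := h2.eventually_ge_atTop (N : ℝ)
      obtain ⟨k, hk1, hk2⟩ := (hev1.and hev2).exists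
      set t := Matrix.trace (M ^ k) with ht
      have htr : ((t : ℤ) : ℝ) = lam ^ k + lam⁻¹ ^ k := part1 k
      have h2k : (2:ℝ) ^ k ≤ ((t : ℤ) : ℝ) := by
        rw [htr]
        have hpl : (2:ℝ) ^ k ≤ lam ^ k :=
          pow_le_pow_left₀ (by norm_num) (Mess.lam_ge_two lam hlam) k
        have hmu : (0:ℝ) ≤ lam⁻¹ ^ k := by positivity
        linarith
      have ht_pos : (0:ℝ) < ((t : ℤ) : ℝ) := lt_of_lt_of_le (by positivity) h2k
      have ht_nonneg : (0:ℤ) ≤ t := by exact_mod_cast ht_pos.le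
      set n := t.toNat with hn
      have hnt : (n : ℤ) = t := Int.toNat_of_nonneg ht_nonneg
      have hnr : ((n : ℕ) : ℝ) = ((t : ℤ) : ℝ) := by exact_mod_cast congrArg Int.cast hnt
      refine ⟨n, ?_, ?_⟩
      · have : (N : ℝ) ≤ (n : ℝ) := by rw [hnr]; linarith
        exact_mod_cast this
      · have hwl : wordLength S (T ^ n) ≤ 4 * k + 2 := by
          have hz : T ^ n = T ^ (t : ℤ) := by rw [← hnt, zpow_natCast]
          rw [hz]
          exact part2 k
        have hn_pos : (0:ℝ) < (n : ℝ) := by rw [hnr]; exact ht_pos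
        calc u n = (wordLength S (T ^ n) : ℝ) / (n : ℝ) := rfl
          _ ≤ ((4 * k + 2 : ℕ) : ℝ) / (2:ℝ) ^ k := by
              apply div_le_div₀ (by positivity) (by exact_mod_cast hwl) (by positivity)
              rw [hnr]; exact h2k
          _ = ((4 * k + 2 : ℕ) : ℝ) * (1/2 : ℝ) ^ k := by
              rw [div_eq_mul_inv, one_div, inv_pow]
          _ ≤ ε := hk1.le
    have hle0 : Filter.liminf u Filter.atTop ≤ 0 := by
      by_contra hc
      push_neg at hc
      have := hle (Filter.liminf u Filter.atTop / 2) (by linarith)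
      linarith
    linarith [hge, hle0]
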